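/- Let T be a triangulation of the infinity-gon with a left-fountain m₀ and a right-fountain n₀ satisfying n₀ - m₀ ≥ 2. Then the arc (m₀, n₀) belongs to T. -/
import Mathlib


/-- An internal arc of the infinity-gon: a pair (m,n) of integers with n - m ≥ 2. -/
def IsArc (a : ℤ × ℤ) : Prop := a.1 + 2 ≤ a.2

/-- Two arcs (m,n) and (p,q) cross if m < p < n < q or p < m < q < n. -/
def Cross (a b : ℤ × ℤ) : Prop :=
  (a.1 < b.1 ∧ b.1 < a.2 ∧ a.2 < b.2) ∨ (b.1 < a.1 ∧ a.1 < b.2 ∧ b.2 < a.2)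

/-- A triangulation of the infinity-gon: a maximal set of pairwise non-crossing internal arcs. -/
def IsTriangulation (T : Set (ℤ × ℤ)) : Prop :=
  (∀ a ∈ T, IsArc a) ∧ (∀ a ∈ T, ∀ b ∈ T, ¬ Cross a b) ∧
    (∀ γ, IsArc γ → (∀ a ∈ T, ¬ Cross γ a) → γ ∈ T)

/-- n is a left-fountain of T: infinitely many arcs of T end at n. -/
def LeftFountain (T : Set (ℤ × ℤ)) (n : ℤ) : Prop := {m : ℤ | (m, n) ∈ T}.Infinite

/-- n is a right-fountain of T: infinitely many arcs of T start at n. -/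
def RightFountain (T : Set (ℤ × ℤ)) (n : ℤ) : Prop := {p : ℤ | (n, p) ∈ T}.Infinite

lemma exists_lt_of_infinite_bddAbove {S : Set ℤ} (hS : S.Infinite) (B : ℤ)
    (hB : ∀ x ∈ S, x ≤ B) (c : ℤ) : ∃ x ∈ S, x < c := by
  by_contra hcon
  push_neg at hcon
  exact hS (Set.Finite.subset (Set.finite_Icc c B) (fun x hx => ⟨hcon x hx, hB x hx⟩))

lemma exists_gt_of_infinite_bddBelow {S : Set ℤ} (hS : S.Infinite) (B : ℤ)
    (hB : ∀ x ∈ S, B ≤ x) (c : ℤ) : ∃ x ∈ S, c < x := by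
  by_contra hcon
  push_neg at hcon
  exact hS (Set.Finite.subset (Set.finite_Icc B c) (fun x hx => ⟨hB x hx, hcon x hx⟩))

theorem stmt5 (T : Set (ℤ × ℤ)) (hT : IsTriangulation T) (m₀ n₀ : ℤ)
    (hl : LeftFountain T m₀) (hr : RightFountain T n₀) (h : m₀ + 2 ≤ n₀) :
    (m₀, n₀) ∈ T := by
  obtain ⟨harc, hnc, hmax⟩ := hT
  apply hmax (m₀, n₀) h
  intro a ha hcross
  rcases hcross with ⟨h1, h2, h3⟩ | ⟨h1, h2, h3⟩
  · -- m₀ < a.1 < n₀ < a.2 : use right fountain, arc (n₀, r) with r > a.2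
    obtain ⟨r, hr', hrgt⟩ := exists_gt_of_infinite_bddBelow hr (n₀ + 2)
      (fun x hx => harc _ hx) a.2
    exact hnc (n₀, r) hr' a ha (Or.inr ⟨h2, h3, hrgt⟩)
  · -- a.1 < m₀ < a.2 < n₀ : use left fountain, arc (m, m₀) with m < a.1
    obtain ⟨m, hm', hmlt⟩ := exists_lt_of_infinite_bddAbove hl (m₀ - 2)
      (fun x hx => by have := harc _ hx; simp [IsArc] at this; omega) a.1
    exact hnc (m, m₀) hm' a ha (Or.inl ⟨hmlt, h1, h2⟩)
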